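/- Let (f*,g*) be potentials. Then the measure π_ε on ℝ^d × ℝ^d defined by dπ_ε/d(P⊗Q)(x,y) := (1/ε)(f*(x)+g*(y)−c(x,y))₊ is a coupling, i.e., π_ε ∈ Π(P,Q), and π_ε is the unique minimizer of the primal problem QOT_ε(P,Q). -/

import Mathlib

open MeasureTheory Metric
open scoped ENNReal

/-- The primal QOT cost of a coupling `π` (for `π ≪ P ⊗ Q`). -/
noncomputable def primalCost {d : ℕ} (ε : ℝ) (P Q : Measure (EuclideanSpace ℝ (Fin d)))
    (c : EuclideanSpace ℝ (Fin d) → EuclideanSpace ℝ (Fin d) → ℝ)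
    (π : Measure (EuclideanSpace ℝ (Fin d) × EuclideanSpace ℝ (Fin d))) : ℝ :=
  (∫ p, c p.1 p.2 ∂π) + (ε / 2) * ∫ p, ((π.rnDeriv (P.prod Q) p).toReal) ^ 2 ∂(P.prod Q)

/-- Feasible couplings: elements of `Π(P,Q)` that are absolutely continuous w.r.t. `P ⊗ Q`
with square-integrable density (all other couplings have primal cost `+∞` by convention). -/
def IsFeasible {d : ℕ} (P Q : Measure (EuclideanSpace ℝ (Fin d)))
    (π : Measure (EuclideanSpace ℝ (Fin d) × EuclideanSpace ℝ (Fin d))) : Prop :=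
  IsProbabilityMeasure π ∧ π.fst = P ∧ π.snd = Q ∧ π ≪ P.prod Q ∧
    MemLp (fun p => (π.rnDeriv (P.prod Q) p).toReal) 2 (P.prod Q)

/-- The candidate optimal coupling `π_ε` with density `(1/ε)(f*(x)+g*(y)-c(x,y))₊`. -/
noncomputable def piEps {d : ℕ} (ε : ℝ) (P Q : Measure (EuclideanSpace ℝ (Fin d)))
    (c : EuclideanSpace ℝ (Fin d) → EuclideanSpace ℝ (Fin d) → ℝ)
    (fStar gStar : EuclideanSpace ℝ (Fin d) → ℝ) :
    Measure (EuclideanSpace ℝ (Fin d) × EuclideanSpace ℝ (Fin d)) :=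
  (P.prod Q).withDensity fun p =>
    ENNReal.ofReal ((1 / ε) * max (fStar p.1 + gStar p.2 - c p.1 p.2) 0)

set_option maxHeartbeats 1000000 in
/-- The measure with density `(1/ε)(f*+g*-c)₊` w.r.t. `P ⊗ Q` is a coupling of `(P,Q)` and is
the unique minimizer of the primal quadratically regularized optimal transport problem. -/
theorem piEps_is_unique_primal_minimizer
    (d : ℕ) (hd : 1 ≤ d) (ε : ℝ) (hε : 0 < ε)
    (Ω Ω' : Set (EuclideanSpace ℝ (Fin d)))
    (hΩc : IsCompact Ω) (hΩconv : Convex ℝ Ω) (hΩne : Ω.Nonempty)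
    (hΩ'c : IsCompact Ω') (hΩ'ne : Ω'.Nonempty)
    (P Q : Measure (EuclideanSpace ℝ (Fin d)))
    [IsProbabilityMeasure P] [IsProbabilityMeasure Q]
    (ρ : EuclideanSpace ℝ (Fin d) → ℝ) (hρm : Measurable ρ)
    (lamP LamP : ℝ) (hlam : 0 < lamP)
    (hPdef : P = (volume.restrict Ω).withDensity fun x => ENNReal.ofReal (ρ x))
    (hρlb : ∀ x ∈ Ω, lamP ≤ ρ x) (hρub : ∀ x ∈ Ω, ρ x ≤ LamP)
    (hQsupp : Q Ω'ᶜ = 0)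
    (c : EuclideanSpace ℝ (Fin d) → EuclideanSpace ℝ (Fin d) → ℝ)
    (L : ℝ) (hL : 0 < L)
    (hc : LipschitzWith (Real.toNNReal L) (Function.uncurry c))
    (fStar gStar : EuclideanSpace ℝ (Fin d) → ℝ)
    (hfsLip : LipschitzOnWith (Real.toNNReal L) fStar Ω)
    (hgsLip : LipschitzOnWith (Real.toNNReal L) gStar Ω')
    (hFOC1 : ∀ x ∈ Ω, ∫ y, max (fStar x + gStar y - c x y) 0 ∂Q = ε)
    (hFOC2 : ∀ y ∈ Ω', ∫ x, max (fStar x + gStar y - c x y) 0 ∂P = ε) :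
    IsFeasible P Q (piEps ε P Q c fStar gStar) ∧
    (∀ π, IsFeasible P Q π →
      primalCost ε P Q c (piEps ε P Q c fStar gStar) ≤ primalCost ε P Q c π) ∧
    (∀ π, IsFeasible P Q π →
      primalCost ε P Q c π = primalCost ε P Q c (piEps ε P Q c fStar gStar) →
      π = piEps ε P Q c fStar gStar) := by
  classical
  have hεne : (ε : ℝ) ≠ 0 := hε.ne'
  have hΩm : MeasurableSet Ω := hΩc.isClosed.measurableSet
  have hΩ'm : MeasurableSet Ω' := hΩ'c.isClosed.measurableSet
  obtain ⟨F, hFlip, hFeq⟩ := hfsLip.extend_real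
  obtain ⟨G, hGlip, hGeq⟩ := hgsLip.extend_real
  set μ := P.prod Q with hμdef
  set φc : (EuclideanSpace ℝ (Fin d) × EuclideanSpace ℝ (Fin d)) → ℝ := fun p => c p.1 p.2 with hφcdef
  set ψ : (EuclideanSpace ℝ (Fin d) × EuclideanSpace ℝ (Fin d)) → ℝ := fun p => F p.1 + G p.2 with hψdef
  set t : (EuclideanSpace ℝ (Fin d) × EuclideanSpace ℝ (Fin d)) → ℝ := fun p => ψ p - φc p with htdef
  set rε : (EuclideanSpace ℝ (Fin d) × EuclideanSpace ℝ (Fin d)) → ℝ := fun p => (1 / ε) * max (t p) 0 with hrεdef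
  set k : (EuclideanSpace ℝ (Fin d) × EuclideanSpace ℝ (Fin d)) → ℝ := fun p => max (-t p) 0 with hkdef
  set D : (EuclideanSpace ℝ (Fin d) × EuclideanSpace ℝ (Fin d)) → ℝ≥0∞ := fun p => ENNReal.ofReal (rε p) with hDdef
  -- continuity facts
  have hφcont : Continuous φc := hc.continuous
  have hψcont : Continuous ψ :=
    (hFlip.continuous.comp continuous_fst).add (hGlip.continuous.comp continuous_snd)
  have htcont : Continuous t := hψcont.sub hφcont
  have hrεcont : Continuous rε := continuous_const.mul (htcont.max continuous_const)
  have hkcont : Continuous k := htcont.neg.max continuous_const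
  have hD : Measurable D := ENNReal.measurable_ofReal.comp hrεcont.measurable
  have hrεnn : ∀ p, 0 ≤ rε p := fun p => mul_nonneg (by positivity) (le_max_right _ _)
  have hknn : ∀ p, 0 ≤ k p := fun p => le_max_right _ _
  -- bounds on the compact set Ω ×ˢ Ω'
  obtain ⟨Mt, hMt⟩ := (hΩc.prod hΩ'c).exists_bound_of_continuousOn htcont.continuousOn
  obtain ⟨Mc, hMc⟩ := (hΩc.prod hΩ'c).exists_bound_of_continuousOn hφcont.continuousOn
  obtain ⟨Mψ, hMψ⟩ := (hΩc.prod hΩ'c).exists_bound_of_continuousOn hψcont.continuousOn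
  obtain ⟨MF, hMF⟩ := hΩc.exists_bound_of_continuousOn hFlip.continuous.continuousOn
  obtain ⟨MG, hMG⟩ := hΩ'c.exists_bound_of_continuousOn hGlip.continuous.continuousOn
  have hmaxb : ∀ p : (EuclideanSpace ℝ (Fin d) × EuclideanSpace ℝ (Fin d)), p.1 ∈ Ω → p.2 ∈ Ω' → ‖max (t p) 0‖ ≤ Mt := by
    intro p h1 h2
    rw [Real.norm_eq_abs, abs_of_nonneg (le_max_right _ _)]
    refine le_trans (max_le (le_abs_self _) (abs_nonneg _)) ?_
    simpa [Real.norm_eq_abs] using hMt p ⟨h1, h2⟩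
  have hkb : ∀ p : (EuclideanSpace ℝ (Fin d) × EuclideanSpace ℝ (Fin d)), p.1 ∈ Ω → p.2 ∈ Ω' → ‖k p‖ ≤ Mt := by
    intro p h1 h2
    rw [hkdef]
    simp only
    rw [Real.norm_eq_abs, abs_of_nonneg (le_max_right _ _)]
    refine le_trans (max_le ?_ (abs_nonneg (t p))) ?_
    · exact (le_abs_self _).trans (le_of_eq (abs_neg _))
    · simpa [Real.norm_eq_abs] using hMt p ⟨h1, h2⟩
  have hrεb : ∀ p : (EuclideanSpace ℝ (Fin d) × EuclideanSpace ℝ (Fin d)), p.1 ∈ Ω → p.2 ∈ Ω' → ‖rε p‖ ≤ (1 / ε) * Mt := by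
    intro p h1 h2
    rw [hrεdef]
    simp only
    rw [Real.norm_eq_abs, abs_mul, abs_of_pos (by positivity : (0:ℝ) < 1 / ε)]
    exact mul_le_mul_of_nonneg_left (by simpa [Real.norm_eq_abs] using hmaxb p h1 h2)
      (by positivity)
  -- support facts
  have hPΩ : P Ωᶜ = 0 := by
    rw [hPdef, withDensity_apply _ hΩm.compl, Measure.restrict_restrict hΩm.compl]
    simp
  have hPae : ∀ᵐ x ∂P, x ∈ Ω := by
    rw [ae_iff]
    exact hPΩ
  have hQae : ∀ᵐ y ∂Q, y ∈ Ω' := by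
    rw [ae_iff]
    exact hQsupp
  have haegen : ∀ (π : Measure ((EuclideanSpace ℝ (Fin d) × EuclideanSpace ℝ (Fin d)))), π.fst = P → π.snd = Q →
      ∀ᵐ p ∂π, p.1 ∈ Ω ∧ p.2 ∈ Ω' := by
    intro π hfst hsnd
    have h1 : π (Ωᶜ ×ˢ (Set.univ : Set (EuclideanSpace ℝ (Fin d)))) = 0 := by
      rw [Set.prod_univ, ← Measure.fst_apply hΩm.compl, hfst]
      exact hPΩ
    have h2 : π ((Set.univ : Set (EuclideanSpace ℝ (Fin d))) ×ˢ Ω'ᶜ) = 0 := by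
      rw [Set.univ_prod, ← Measure.snd_apply hΩ'm.compl, hsnd]
      exact hQsupp
    rw [ae_iff]
    refine measure_mono_null (fun p hp => ?_) (measure_union_null h1 h2)
    rcases not_and_or.1 hp with h | h
    · exact Or.inl ⟨h, trivial⟩
    · exact Or.inr ⟨trivial, h⟩
  have hμfst : μ.fst = P := by rw [hμdef, Measure.fst_prod]
  have hμsnd : μ.snd = Q := by rw [hμdef, Measure.snd_prod]
  have hμae : ∀ᵐ p ∂μ, p.1 ∈ Ω ∧ p.2 ∈ Ω' := haegen μ hμfst hμsnd
  -- the candidate measure as withDensity of a nice density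
  have hWeq : piEps ε P Q c fStar gStar = μ.withDensity D := by
    rw [piEps]
    refine withDensity_congr_ae ?_
    filter_upwards [hμae] with p hp
    rw [hDdef]
    simp only [hrεdef, htdef, hψdef, hφcdef, hFeq hp.1, hGeq hp.2]
  -- first-order conditions in terms of the extended potentials
  have hFOC1' : ∀ x ∈ Ω, ∫ y, max (t (x, y)) 0 ∂Q = ε := by
    intro x hx
    rw [← hFOC1 x hx]
    refine integral_congr_ae ?_
    filter_upwards [hQae] with y hy
    simp only [htdef, hψdef, hφcdef, hFeq hx, hGeq hy]
  have hFOC2' : ∀ y ∈ Ω', ∫ x, max (t (x, y)) 0 ∂P = ε := by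
    intro y hy
    rw [← hFOC2 y hy]
    refine integral_congr_ae ?_
    filter_upwards [hPae] with x hx
    simp only [htdef, hψdef, hφcdef, hFeq hx, hGeq hy]
  -- section integrability and inner lintegrals
  have hsecQ : ∀ x ∈ Ω, Integrable (fun y => max (t (x, y)) 0) Q := by
    intro x hx
    refine Integrable.mono' (integrable_const Mt)
      (((htcont.comp (Continuous.prodMk_right x)).max continuous_const).aestronglyMeasurable) ?_
    filter_upwards [hQae] with y hy using hmaxb (x, y) hx hy
  have hsecP : ∀ y ∈ Ω', Integrable (fun x => max (t (x, y)) 0) P := by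
    intro y hy
    refine Integrable.mono' (integrable_const Mt)
      (((htcont.comp (continuous_id.prodMk continuous_const)).max
        continuous_const).aestronglyMeasurable) ?_
    filter_upwards [hPae] with x hx using hmaxb (x, y) hx hy
  have hinner1 : ∀ x ∈ Ω, ∫⁻ y, D (x, y) ∂Q = 1 := by
    intro x hx
    have hofr := MeasureTheory.ofReal_integral_eq_lintegral_ofReal (hsecQ x hx)
      (Filter.Eventually.of_forall fun y => le_max_right _ _)
    calc ∫⁻ y, D (x, y) ∂Q
        = ∫⁻ y, ENNReal.ofReal (1 / ε) * ENNReal.ofReal (max (t (x, y)) 0) ∂Q := by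
          refine lintegral_congr fun y => ?_
          rw [hDdef]
          simp only [hrεdef]
          rw [ENNReal.ofReal_mul (by positivity)]
      _ = ENNReal.ofReal (1 / ε) * ∫⁻ y, ENNReal.ofReal (max (t (x, y)) 0) ∂Q :=
          lintegral_const_mul _ (ENNReal.measurable_ofReal.comp
            ((htcont.comp (Continuous.prodMk_right x)).max continuous_const).measurable)
      _ = ENNReal.ofReal (1 / ε) * ENNReal.ofReal ε := by
          rw [← hofr, hFOC1' x hx]
      _ = 1 := by
          rw [← ENNReal.ofReal_mul (by positivity), one_div, inv_mul_cancel₀ hεne,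
            ENNReal.ofReal_one]
  have hinner2 : ∀ y ∈ Ω', ∫⁻ x, D (x, y) ∂P = 1 := by
    intro y hy
    have hofr := MeasureTheory.ofReal_integral_eq_lintegral_ofReal (hsecP y hy)
      (Filter.Eventually.of_forall fun x => le_max_right _ _)
    calc ∫⁻ x, D (x, y) ∂P
        = ∫⁻ x, ENNReal.ofReal (1 / ε) * ENNReal.ofReal (max (t (x, y)) 0) ∂P := by
          refine lintegral_congr fun x => ?_
          rw [hDdef]
          simp only [hrεdef]
          rw [ENNReal.ofReal_mul (by positivity)]
      _ = ENNReal.ofReal (1 / ε) * ∫⁻ x, ENNReal.ofReal (max (t (x, y)) 0) ∂P :=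
          lintegral_const_mul _ (ENNReal.measurable_ofReal.comp
            ((htcont.comp (continuous_id.prodMk continuous_const)).max
              continuous_const).measurable)
      _ = ENNReal.ofReal (1 / ε) * ENNReal.ofReal ε := by
          rw [← hofr, hFOC2' y hy]
      _ = 1 := by
          rw [← ENNReal.ofReal_mul (by positivity), one_div, inv_mul_cancel₀ hεne,
            ENNReal.ofReal_one]
  -- marginals of the candidate
  have hWfst : (μ.withDensity D).fst = P := by
    ext s hs
    rw [Measure.fst_apply hs, ← Set.prod_univ,
      withDensity_apply _ (hs.prod MeasurableSet.univ), hμdef,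
      ← Measure.restrict_prod_eq_prod_univ, lintegral_prod _ hD.aemeasurable]
    have hae : ∀ᵐ x ∂(P.restrict s), x ∈ Ω := ae_restrict_of_ae hPae
    rw [lintegral_congr_ae (hae.mono fun x hx => hinner1 x hx), lintegral_one,
      Measure.restrict_apply_univ]
  have hWsnd : (μ.withDensity D).snd = Q := by
    ext s hs
    have hres : (P.prod Q).restrict (Set.univ ×ˢ s) = P.prod (Q.restrict s) := by
      rw [← Measure.prod_restrict, Measure.restrict_univ]
    rw [Measure.snd_apply hs, ← Set.univ_prod,
      withDensity_apply _ (MeasurableSet.univ.prod hs), hμdef, hres,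
      lintegral_prod_symm _ hD.aemeasurable]
    have hae : ∀ᵐ y ∂(Q.restrict s), y ∈ Ω' := ae_restrict_of_ae hQae
    rw [lintegral_congr_ae (hae.mono fun y hy => hinner2 y hy), lintegral_one,
      Measure.restrict_apply_univ]
  have hWac : μ.withDensity D ≪ μ := withDensity_absolutelyContinuous _ _
  have hWrn : (μ.withDensity D).rnDeriv μ =ᵐ[μ] D := Measure.rnDeriv_withDensity μ hD
  have hrtoW : (fun p => ((μ.withDensity D).rnDeriv μ p).toReal) =ᵐ[μ] rε := by
    filter_upwards [hWrn] with p hp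
    rw [hp, hDdef]
    exact ENNReal.toReal_ofReal (hrεnn p)
  have hrεmem : MemLp rε 2 μ := by
    refine MemLp.of_bound hrεcont.aestronglyMeasurable ((1 / ε) * Mt) ?_
    filter_upwards [hμae] with p hp using hrεb p hp.1 hp.2
  have hWmem : MemLp (fun p => ((μ.withDensity D).rnDeriv μ p).toReal) 2 μ :=
    hrεmem.ae_eq hrtoW.symm
  haveI hWprob : IsProbabilityMeasure (μ.withDensity D) := by
    constructor
    rw [← Measure.fst_univ, hWfst]
    exact measure_univ
  have hWfeas : IsFeasible P Q (μ.withDensity D) := ⟨hWprob, hWfst, hWsnd, hWac, hWmem⟩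
  have hWaeΩ : ∀ᵐ p ∂(μ.withDensity D), p.1 ∈ Ω ∧ p.2 ∈ Ω' := haegen _ hWfst hWsnd
  have hrεint : Integrable rε μ := hrεmem.integrable one_le_two
  have hIrε2 : Integrable (fun p => rε p ^ 2) μ := hrεmem.integrable_sq
  -- cost of the candidate
  have hIφrε : Integrable (fun p => φc p * rε p) μ := by
    refine Integrable.bdd_mul (c := Mc) hrεint hφcont.aestronglyMeasurable ?_
    filter_upwards [hμae] with p hp using hMc p ⟨hp.1, hp.2⟩
  have hIψrε : Integrable (fun p => ψ p * rε p) μ := by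
    refine Integrable.bdd_mul (c := Mψ) hrεint hψcont.aestronglyMeasurable ?_
    filter_upwards [hμae] with p hp using hMψ p ⟨hp.1, hp.2⟩
  have hcostW : primalCost ε P Q c (μ.withDensity D)
      = (∫ p, φc p * rε p ∂μ) + (ε / 2) * ∫ p, rε p ^ 2 ∂μ := by
    rw [primalCost]
    congr 1
    · calc ∫ p, c p.1 p.2 ∂(μ.withDensity D)
          = ∫ p, ((μ.withDensity D).rnDeriv μ p).toReal • φc p ∂μ :=
            (integral_rnDeriv_smul hWac).symm
        _ = ∫ p, φc p * rε p ∂μ := by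
            refine integral_congr_ae ?_
            filter_upwards [hrtoW] with p hp
            have hp' : ((μ.withDensity D).rnDeriv μ p).toReal = rε p := hp
            rw [smul_eq_mul, hp', mul_comm]
    · congr 1
      refine integral_congr_ae ?_
      filter_upwards [hrtoW] with p hp
      rw [hp]
  -- marginal integrals for feasible couplings
  have hmargint : ∀ (π : Measure ((EuclideanSpace ℝ (Fin d) × EuclideanSpace ℝ (Fin d)))), IsProbabilityMeasure π → π.fst = P → π.snd = Q →
      ∫ p, ψ p ∂π = (∫ x, F x ∂P) + ∫ y, G y ∂Q := by
    intro π hprob hfst hsnd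
    haveI := hprob
    have hae := haegen π hfst hsnd
    have hintF : Integrable (fun p : (EuclideanSpace ℝ (Fin d) × EuclideanSpace ℝ (Fin d)) => F p.1) π := by
      refine Integrable.mono' (integrable_const MF)
        ((hFlip.continuous.comp continuous_fst).aestronglyMeasurable) ?_
      filter_upwards [hae] with p hp using hMF p.1 hp.1
    have hintG : Integrable (fun p : (EuclideanSpace ℝ (Fin d) × EuclideanSpace ℝ (Fin d)) => G p.2) π := by
      refine Integrable.mono' (integrable_const MG)
        ((hGlip.continuous.comp continuous_snd).aestronglyMeasurable) ?_
      filter_upwards [hae] with p hp using hMG p.2 hp.2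
    rw [hψdef]
    rw [integral_add hintF hintG]
    congr 1
    · rw [← hfst]
      exact (integral_map measurable_fst.aemeasurable
        hFlip.continuous.aestronglyMeasurable).symm
    · rw [← hsnd]
      exact (integral_map measurable_snd.aemeasurable
        hGlip.continuous.aestronglyMeasurable).symm
  -- the key expansion of the primal cost
  have hmain : ∀ (π : Measure ((EuclideanSpace ℝ (Fin d) × EuclideanSpace ℝ (Fin d)))), IsFeasible P Q π →
      primalCost ε P Q c π = primalCost ε P Q c (μ.withDensity D)
        + ∫ p, ((ε / 2) * ((π.rnDeriv μ p).toReal - rε p) ^ 2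
            + k p * (π.rnDeriv μ p).toReal) ∂μ
      ∧ Integrable (fun p => (ε / 2) * ((π.rnDeriv μ p).toReal - rε p) ^ 2
            + k p * (π.rnDeriv μ p).toReal) μ := by
    rintro π ⟨hprob, hfst, hsnd, hac, hmem⟩
    haveI := hprob
    set r : (EuclideanSpace ℝ (Fin d) × EuclideanSpace ℝ (Fin d)) → ℝ := fun p => (π.rnDeriv μ p).toReal with hrdef
    have hrint : Integrable r μ := hmem.integrable one_le_two
    have hIr2 : Integrable (fun p => r p ^ 2) μ := hmem.integrable_sq
    have hIsub2 : Integrable (fun p => (r p - rε p) ^ 2) μ := (hmem.sub hrεmem).integrable_sq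
    have hIφr : Integrable (fun p => φc p * r p) μ := by
      refine Integrable.bdd_mul (c := Mc) hrint hφcont.aestronglyMeasurable ?_
      filter_upwards [hμae] with p hp using hMc p ⟨hp.1, hp.2⟩
    have hIψr : Integrable (fun p => ψ p * r p) μ := by
      refine Integrable.bdd_mul (c := Mψ) hrint hψcont.aestronglyMeasurable ?_
      filter_upwards [hμae] with p hp using hMψ p ⟨hp.1, hp.2⟩
    have hIkr : Integrable (fun p => k p * r p) μ := by
      refine Integrable.bdd_mul (c := Mt) hrint hkcont.aestronglyMeasurable ?_
      filter_upwards [hμae] with p hp using hkb p hp.1 hp.2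
    have hIψsub : Integrable (fun p => ψ p * (r p - rε p)) μ := by
      have := hIψr.sub hIψrε
      refine this.congr ?_
      exact Filter.Eventually.of_forall fun p => (mul_sub (ψ p) (r p) (rε p)).symm
    have hB : Integrable (fun p => (ε / 2) * (r p - rε p) ^ 2 + k p * r p) μ :=
      (hIsub2.const_mul _).add hIkr
    -- pointwise identity
    have hpt : ∀ p, φc p * r p + (ε / 2) * r p ^ 2
        = (φc p * rε p + (ε / 2) * rε p ^ 2)
          + ((ε / 2) * (r p - rε p) ^ 2 + k p * r p) + ψ p * (r p - rε p) := by
      intro p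
      rcases le_total (t p) 0 with h | h
      · have h1 : max (t p) 0 = 0 := max_eq_right h
        have h2 : max (-t p) 0 = -t p := max_eq_left (neg_nonneg.2 h)
        simp only [hrεdef, hkdef]
        rw [h1, h2]
        simp only [htdef]
        ring
      · have h1 : max (t p) 0 = t p := max_eq_left h
        have h2 : max (-t p) 0 = 0 := max_eq_right (neg_nonpos.2 h)
        simp only [hrεdef, hkdef]
        rw [h1, h2]
        simp only [htdef]
        field_simp
        ring
    -- the ψ-term integrates to zero
    have hψzero : ∫ p, ψ p * (r p - rε p) ∂μ = 0 := by
      have e1 : ∫ p, ψ p * r p ∂μ = ∫ p, ψ p ∂π := by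
        calc ∫ p, ψ p * r p ∂μ = ∫ p, (π.rnDeriv μ p).toReal • ψ p ∂μ := by
              refine integral_congr_ae (Filter.Eventually.of_forall fun p => ?_)
              simp only [smul_eq_mul]
              exact mul_comm _ _
          _ = ∫ p, ψ p ∂π := integral_rnDeriv_smul hac
      have e2 : ∫ p, ψ p * rε p ∂μ = ∫ p, ψ p ∂(μ.withDensity D) := by
        calc ∫ p, ψ p * rε p ∂μ
            = ∫ p, ((μ.withDensity D).rnDeriv μ p).toReal • ψ p ∂μ := by
              refine integral_congr_ae ?_
              filter_upwards [hrtoW] with p hp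
              have hp' : ((μ.withDensity D).rnDeriv μ p).toReal = rε p := hp
              rw [smul_eq_mul, hp', mul_comm]
          _ = ∫ p, ψ p ∂(μ.withDensity D) := integral_rnDeriv_smul hWac
      have esub : ∫ p, ψ p * (r p - rε p) ∂μ
          = (∫ p, ψ p * r p ∂μ) - ∫ p, ψ p * rε p ∂μ := by
        rw [← integral_sub hIψr hIψrε]
        refine integral_congr_ae (Filter.Eventually.of_forall fun p => ?_)
        exact mul_sub _ _ _
      rw [esub, e1, e2, hmargint π hprob hfst hsnd, hmargint _ hWprob hWfst hWsnd, sub_self]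
    refine ⟨?_, hB⟩
    have eφ : ∫ p, c p.1 p.2 ∂π = ∫ p, φc p * r p ∂μ := by
      calc ∫ p, c p.1 p.2 ∂π = ∫ p, (π.rnDeriv μ p).toReal • φc p ∂μ :=
            (integral_rnDeriv_smul hac).symm
        _ = ∫ p, φc p * r p ∂μ := by
            refine integral_congr_ae (Filter.Eventually.of_forall fun p => ?_)
            simp only [smul_eq_mul]
            exact mul_comm _ _
    rw [primalCost, hcostW, eφ]
    have hA : Integrable (fun p => φc p * rε p + (ε / 2) * rε p ^ 2) μ :=
      hIφrε.add (hIrε2.const_mul _)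
    calc (∫ p, φc p * r p ∂μ) + (ε / 2) * ∫ p, r p ^ 2 ∂μ
        = ∫ p, (φc p * r p + (ε / 2) * r p ^ 2) ∂μ := by
          rw [integral_add hIφr (hIr2.const_mul _), integral_const_mul]
      _ = ∫ p, ((φc p * rε p + (ε / 2) * rε p ^ 2)
            + ((ε / 2) * (r p - rε p) ^ 2 + k p * r p) + ψ p * (r p - rε p)) ∂μ :=
          integral_congr_ae (Filter.Eventually.of_forall fun p => hpt p)
      _ = (∫ p, (φc p * rε p + (ε / 2) * rε p ^ 2) ∂μ)
            + (∫ p, ((ε / 2) * (r p - rε p) ^ 2 + k p * r p) ∂μ)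
            + ∫ p, ψ p * (r p - rε p) ∂μ := by
          have hAB : Integrable (fun p => (φc p * rε p + (ε / 2) * rε p ^ 2)
              + ((ε / 2) * (r p - rε p) ^ 2 + k p * r p)) μ := hA.add hB
          rw [integral_add hAB hIψsub, integral_add hA hB]
      _ = ((∫ p, φc p * rε p ∂μ) + (ε / 2) * ∫ p, rε p ^ 2 ∂μ)
            + ∫ p, ((ε / 2) * (r p - rε p) ^ 2 + k p * r p) ∂μ := by
          rw [hψzero, add_zero, integral_add hIφrε (hIrε2.const_mul _), integral_const_mul]
  -- conclude
  refine ⟨by rw [hWeq]; exact hWfeas, ?_, ?_⟩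
  · intro π hfeas
    rw [hWeq]
    obtain ⟨heq, -⟩ := hmain π hfeas
    rw [heq]
    have hnn : 0 ≤ ∫ p, ((ε / 2) * ((π.rnDeriv μ p).toReal - rε p) ^ 2
        + k p * (π.rnDeriv μ p).toReal) ∂μ := by
      refine integral_nonneg fun p => add_nonneg
        (mul_nonneg (by positivity) (sq_nonneg _))
        (mul_nonneg (hknn p) ENNReal.toReal_nonneg)
    linarith
  · intro π hfeas hcosteq
    obtain ⟨heq, hint⟩ := hmain π hfeas
    obtain ⟨hprob, hfst, hsnd, hac, hmem⟩ := hfeas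
    rw [hWeq] at hcosteq ⊢
    have hzero : ∫ p, ((ε / 2) * ((π.rnDeriv μ p).toReal - rε p) ^ 2
        + k p * (π.rnDeriv μ p).toReal) ∂μ = 0 := by
      rw [heq] at hcosteq
      linarith
    have hae0 : (fun p => (ε / 2) * ((π.rnDeriv μ p).toReal - rε p) ^ 2
        + k p * (π.rnDeriv μ p).toReal) =ᵐ[μ] 0 := by
      refine (integral_eq_zero_iff_of_nonneg ?_ hint).1 hzero
      intro p
      exact add_nonneg (mul_nonneg (by positivity) (sq_nonneg _))
        (mul_nonneg (hknn p) ENNReal.toReal_nonneg)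
    have haer : (fun p => (π.rnDeriv μ p).toReal) =ᵐ[μ] rε := by
      filter_upwards [hae0] with p hp
      simp only [Pi.zero_apply] at hp
      have h1 : (0:ℝ) ≤ (ε / 2) * ((π.rnDeriv μ p).toReal - rε p) ^ 2 :=
        mul_nonneg (by positivity) (sq_nonneg _)
      have h2 : (0:ℝ) ≤ k p * (π.rnDeriv μ p).toReal :=
        mul_nonneg (hknn p) ENNReal.toReal_nonneg
      have hsq : ((π.rnDeriv μ p).toReal - rε p) ^ 2 = 0 := by
        nlinarith
      have := (pow_eq_zero_iff (two_ne_zero)).1 hsq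
      have := sub_eq_zero.1 this
      exact this
    rw [← Measure.withDensity_rnDeriv_eq π μ hac]
    refine withDensity_congr_ae ?_
    filter_upwards [Measure.rnDeriv_lt_top π μ, haer] with p h1 h2
    rw [hDdef]
    simp only
    rw [← ENNReal.ofReal_toReal h1.ne, h2]
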